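/- Let \(\mathcal{H}\) be an abelian length category and let \((\mathcal{U},\mathcal{V})\), \((\mathcal{T},\mathcal{F})\) be torsion pairs with \(\mathcal{U} \subsetneq \mathcal{T}\). Suppose that \(\mathcal{T}\cap\mathcal{V} = \mathrm{filt}(M)\) for some brick \(M\), where \(\mathrm{filt}(M)\) is the class of objects with a finite filtration by copies of \(M\). Then the inclusion \(\mathcal{U} \subseteq \mathcal{T}\) is a minimal inclusion of torsion classes: any torsion class \(\mathcal{X}\) with \(\mathcal{U} \subseteq \mathcal{X} \subseteq \mathcal{T}\) equals \(\mathcal{U}\) or \(\mathcal{T}\). -/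

import Mathlib

open CategoryTheory Limits

universe v u

namespace Mut

variable {C : Type u} [Category.{v} C]

/-- A class of objects closed under isomorphisms. -/
def IsoClosed (S : Set C) : Prop := ∀ ⦃X Y : C⦄, (X ≅ Y) → X ∈ S → Y ∈ S

/-- `g : E ⟶ X` is an `M`-precover of `X`. -/
def IsPrecover (M : Set C) {E X : C} (g : E ⟶ X) : Prop :=
  E ∈ M ∧ ∀ ⦃E' : C⦄ (f : E' ⟶ X), E' ∈ M → ∃ h : E' ⟶ E, h ≫ g = f

/-- `g : E ⟶ X` is an `M`-cover of `X`. -/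
def IsCover (M : Set C) {E X : C} (g : E ⟶ X) : Prop :=
  IsPrecover M g ∧ ∀ h : E ⟶ E, h ≫ g = g → IsIso h

/-- `g : X ⟶ E` is an `M`-preenvelope of `X`. -/
def IsPreenvelope (M : Set C) {X E : C} (g : X ⟶ E) : Prop :=
  E ∈ M ∧ ∀ ⦃E' : C⦄ (f : X ⟶ E'), E' ∈ M → ∃ h : E ⟶ E', g ≫ h = f

/-- `g : X ⟶ E` is an `M`-envelope of `X`. -/
def IsEnvelope (M : Set C) {X E : C} (g : X ⟶ E) : Prop :=
  IsPreenvelope M g ∧ ∀ h : E ⟶ E, g ≫ h = g → IsIso h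

section Abelian

variable [Abelian C]

/-- `0 ⟶ A ⟶ X ⟶ B ⟶ 0` is a short exact sequence. -/
def SES {A X B : C} (i : A ⟶ X) (p : X ⟶ B) : Prop :=
  ∃ w : i ≫ p = 0, (ShortComplex.mk i p w).ShortExact

/-- A class of objects closed under extensions. -/
def ClosedUnderExtensions (S : Set C) : Prop :=
  ∀ ⦃A X B : C⦄ (i : A ⟶ X) (p : X ⟶ B), SES i p → A ∈ S → B ∈ S → X ∈ S

/-- A torsion pair `(T, F)` in an abelian category: strict (iso-closed) full
subcategories with no nonzero maps from `T` to `F`, such that every object is an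
extension of an object of `F` by an object of `T`. -/
structure IsTorsionPair (T F : Set C) : Prop where
  isoClosed_torsion : IsoClosed T
  isoClosed_free : IsoClosed F
  hom_zero : ∀ ⦃X Y : C⦄, X ∈ T → Y ∈ F → ∀ f : X ⟶ Y, f = 0
  exists_ses : ∀ X : C, ∃ (A B : C) (i : A ⟶ X) (p : X ⟶ B),
    A ∈ T ∧ B ∈ F ∧ SES i p

/-- `M ⋆ N`: objects that are extensions of an object of `N` by an object of `M`. -/
def star (M N : Set C) : Set C :=
  {X | ∃ (A B : C) (i : A ⟶ X) (p : X ⟶ B), A ∈ M ∧ B ∈ N ∧ SES i p}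

/-- `X` has a filtration `0 = X₀ ⊆ X₁ ⊆ X₂ ⊆ X₃ = X` with `X₁ ∈ U`,
`X₂/X₁ ∈ S` and `X/X₂ ∈ F`. -/
def HasFiltration (U S F : Set C) (X : C) : Prop :=
  ∃ (X₁ X₂ : C) (a : X₁ ⟶ X₂) (b : X₂ ⟶ X), Mono a ∧ Mono b ∧
    X₁ ∈ U ∧ cokernel a ∈ S ∧ cokernel b ∈ F

/-- A filtration triple `(U, S, F)` in an abelian category. -/
structure IsFiltrationTriple (U S F : Set C) : Prop where
  isoClosed_U : IsoClosed U
  isoClosed_S : IsoClosed S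
  isoClosed_F : IsoClosed F
  hom_US : ∀ ⦃X Y : C⦄, X ∈ U → Y ∈ S → ∀ f : X ⟶ Y, f = 0
  hom_UF : ∀ ⦃X Y : C⦄, X ∈ U → Y ∈ F → ∀ f : X ⟶ Y, f = 0
  hom_SF : ∀ ⦃X Y : C⦄, X ∈ S → Y ∈ F → ∀ f : X ⟶ Y, f = 0
  filt : ∀ X : C, HasFiltration U S F X

/-- A wide subcategory: an iso-closed class closed under kernels, cokernels
and extensions. -/
def IsWide (S : Set C) : Prop :=
  IsoClosed S ∧ ClosedUnderExtensions S ∧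
    (∀ ⦃X Y : C⦄ (f : X ⟶ Y), X ∈ S → Y ∈ S → kernel f ∈ S) ∧
    (∀ ⦃X Y : C⦄ (f : X ⟶ Y), X ∈ S → Y ∈ S → cokernel f ∈ S)

end Abelian

/-- Objects admitting a finite filtration with factors in `S`. -/
inductive FiltFin [Abelian C] (S : Set C) : C → Prop
  | of_isZero {X : C} (h : IsZero X) : FiltFin S X
  | of_ext {A X B : C} (i : A ⟶ X) (p : X ⟶ B) (hse : SES i p)
      (hA : FiltFin S A) (hB : B ∈ S) : FiltFin S X

section Aux

variable [Abelian C]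

/-- If the cokernel map of a SES is zero, the kernel map is an iso. -/
lemma aux_iso_of_ses_zero {A X B : C} {i : A ⟶ X} {p : X ⟶ B} (hse : SES i p)
    (hp : p = 0) : IsIso i := by
  obtain ⟨w, se⟩ := hse
  haveI := se.mono_f
  haveI := se.epi_g
  obtain ⟨l, hl⟩ := se.exact.lift' (𝟙 X) (by simp [hp])
  haveI : IsSplitEpi i := ⟨⟨⟨l, hl⟩⟩⟩
  exact isIso_of_mono_of_epi i

/-- Membership characterization for the torsion part. -/
lemma aux_mem_iff {T F : Set C} (h : IsTorsionPair T F) (X : C) :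
    X ∈ T ↔ ∀ ⦃Z : C⦄, Z ∈ F → ∀ f : X ⟶ Z, f = 0 := by
  constructor
  · exact fun hX Z hZ f => h.hom_zero hX hZ f
  · intro hz
    obtain ⟨A, B, i, p, hA, hB, hse⟩ := h.exists_ses X
    have hp : p = 0 := hz hB p
    have : IsIso i := aux_iso_of_ses_zero hse hp
    exact h.isoClosed_torsion (asIso i) hA

/-- Torsion classes are closed under quotients. -/
lemma aux_quot {T F : Set C} (h : IsTorsionPair T F) {X Q : C} (p : X ⟶ Q) [Epi p]
    (hX : X ∈ T) : Q ∈ T := by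
  rw [aux_mem_iff h]
  intro Z hZ f
  have h0 : p ≫ f = 0 := h.hom_zero hX hZ _
  rw [← cancel_epi p, h0, comp_zero]

/-- Torsion classes are closed under extensions. -/
lemma aux_ext {T F : Set C} (h : IsTorsionPair T F) {A X B : C} {i : A ⟶ X} {p : X ⟶ B}
    (hse : SES i p) (hA : A ∈ T) (hB : B ∈ T) : X ∈ T := by
  rw [aux_mem_iff h]
  intro Z hZ f
  obtain ⟨w, se⟩ := hse
  haveI := se.epi_g
  obtain ⟨g, hg⟩ := se.exact.desc' f (h.hom_zero hA hZ _)
  have hg0 : g = 0 := h.hom_zero hB hZ g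
  rw [← hg, hg0, comp_zero]

/-- Torsion classes contain zero objects. -/
lemma aux_zero {T F : Set C} (h : IsTorsionPair T F) {X : C} (hX : IsZero X) : X ∈ T := by
  rw [aux_mem_iff h]
  intro Z hZ f
  exact hX.eq_zero_of_src f

/-- Torsion classes are closed under `FiltFin` of a subset. -/
lemma aux_filt {T F : Set C} (h : IsTorsionPair T F) {S : Set C} (hS : S ⊆ T) {X : C}
    (hX : FiltFin S X) : X ∈ T := by
  induction hX with
  | of_isZero hz => exact aux_zero h hz
  | of_ext i p hse _ hB ih => exact aux_ext h hse ih (hS hB)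

end Aux

/-- In an abelian length category, if `T ∩ V = filt M` for a brick `M`, then
`U ⊆ T` is a minimal inclusion of torsion classes. -/
theorem statement_16 [Abelian C]
    (hlen : ∀ X : C, IsNoetherianObject X ∧ IsArtinianObject X)
    {U V T F : Set C} (hUV : IsTorsionPair U V) (hTF : IsTorsionPair T F)
    (hUT : U ⊆ T) (hne : U ≠ T)
    {M : C} (hMnz : ¬ IsZero M) (hMbrick : ∀ f : M ⟶ M, f = 0 ∨ IsIso f)
    (hS : T ∩ V = {X | FiltFin ({M} : Set C) X}) :
    ∀ 𝒳 : Set C, (∃ 𝒴 : Set C, IsTorsionPair 𝒳 𝒴) →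
      U ⊆ 𝒳 → 𝒳 ⊆ T → 𝒳 = U ∨ 𝒳 = T := by
  rintro 𝒳 ⟨𝒴, hXY⟩ hUX hXT
  by_cases hXU : 𝒳 = U
  · exact Or.inl hXU
  right
  -- there is some X ∈ 𝒳 \ U
  obtain ⟨X, hX𝒳, hXnU⟩ : ∃ X, X ∈ 𝒳 ∧ X ∉ U := by
    by_contra hc
    push_neg at hc
    exact hXU (Set.Subset.antisymm hc hUX)
  -- decompose X with respect to (U, V)
  obtain ⟨A, B, i, p, hA, hB, hse⟩ := hUV.exists_ses X
  haveI : Epi p := hse.2.epi_g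
  -- B ∈ 𝒳 ∩ T ∩ V
  have hB𝒳 : B ∈ 𝒳 := aux_quot hXY p hX𝒳
  have hBT : B ∈ T := hXT hB𝒳
  have hBfilt : FiltFin ({M} : Set C) B := by
    have h' : B ∈ T ∩ V := ⟨hBT, hB⟩
    rw [hS] at h'; exact h'
  -- B is not zero, otherwise X ∈ U
  have hBnz : ¬ IsZero B := by
    intro hz
    have : IsIso i := aux_iso_of_ses_zero hse (hz.eq_zero_of_tgt p)
    exact hXnU (hUV.isoClosed_torsion (asIso i) hA)
  -- hence M is a quotient of B, so M ∈ 𝒳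
  have hM𝒳 : M ∈ 𝒳 := by
    cases hBfilt with
    | of_isZero hz => exact absurd hz hBnz
    | of_ext i' p' hse' _ hB' =>
      haveI : Epi p' := hse'.2.epi_g
      have := aux_quot hXY p' hB𝒳
      rwa [Set.mem_singleton_iff.mp hB'] at this
  -- now T ⊆ 𝒳
  refine Set.Subset.antisymm hXT (fun Y hYT => ?_)
  obtain ⟨A', B', i', p', hA', hB', hse'⟩ := hUV.exists_ses Y
  haveI : Epi p' := hse'.2.epi_g
  have hB'T : B' ∈ T := aux_quot hTF p' hYT
  have hB'filt : FiltFin ({M} : Set C) B' := by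
    have h' : B' ∈ T ∩ V := ⟨hB'T, hB'⟩
    rw [hS] at h'; exact h'
  have hB'𝒳 : B' ∈ 𝒳 :=
    aux_filt hXY (fun Z hZ => by rwa [Set.mem_singleton_iff.mp hZ]) hB'filt
  exact aux_ext hXY hse' (hUX hA') hB'𝒳

end Mut
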